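/- For the 5-periodic pentagon recurrence with X_k X_{k+2} = 1 + X_{k+1} (indices mod 5) and seed forms W_k satisfying W_{k+1} - W_k = X_k wedge (X_k + 1), the element W_k - X_{k-1} wedge X_k in Lambda^2 of the multiplicative group (tensored with Q) is independent of k in Z/5Z. -/
import Mathlib


/-- For the 5-periodic pentagon recurrence `X_{k-1} X_{k+1} = 1 + X_k` with
seed forms satisfying `W_{k+1} - W_k = X_k ∧ (X_k + 1)`, the element
`W_k - X_{k-1} ∧ X_k` of `Λ²(F^×)⊗ℚ` is independent of `k ∈ ℤ/5`; the
exterior square is modeled by an alternating bimultiplicative map `w`. -/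
theorem stmt_7 {F : Type*} [Field F] {M : Type*} [AddCommGroup M] [Module ℚ M]
    (w : F → F → M)
    (hmul₁ : ∀ a b c : F, a ≠ 0 → b ≠ 0 → c ≠ 0 → w (a * b) c = w a c + w b c)
    (hmul₂ : ∀ a b c : F, a ≠ 0 → b ≠ 0 → c ≠ 0 → w a (b * c) = w a b + w a c)
    (halt : ∀ a b : F, w a b = - w b a)
    (X : ZMod 5 → F) (hX0 : ∀ k, X k ≠ 0)
    (hrec : ∀ k, X (k - 1) * X (k + 1) = 1 + X k)
    (W : ZMod 5 → M)
    (hW : ∀ k, W (k + 1) - W k = w (X k) (X k + 1)) :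
    ∀ k l : ZMod 5,
      W k - w (X (k - 1)) (X k) = W l - w (X (l - 1)) (X l) := by
  have key : ∀ k : ZMod 5, W (k + 1) - w (X k) (X (k + 1))
      = W k - w (X (k - 1)) (X k) := by
    intro k
    have h1 : w (X k) (X (k - 1) * X (k + 1))
        = w (X k) (X (k - 1)) + w (X k) (X (k + 1)) :=
      hmul₂ _ _ _ (hX0 _) (hX0 _) (hX0 _)
    rw [hrec k] at h1
    have h2 : W (k + 1) = W k + w (X k) (X k + 1) := by
      rw [← hW k]; abel
    have h3 : w (X k) (X k + 1) = w (X k) (X (k - 1)) + w (X k) (X (k + 1)) := by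
      rw [add_comm (X k) 1]; exact h1
    rw [h2, h3, halt (X k) (X (k - 1))]
    abel
  intro k l
  set G : ZMod 5 → M := fun k => W k - w (X (k - 1)) (X k) with hG
  have key' : ∀ k : ZMod 5, G (k + 1) = G k := by
    intro k
    simpa [hG] using key k
  have step : ∀ (k : ZMod 5) (n : ℕ), G (k + n) = G k := by
    intro k n
    induction n with
    | zero => simp
    | succ n ih =>
      have : (k : ZMod 5) + (n + 1 : ℕ) = (k + n) + 1 := by push_cast; ring
      rw [this, key', ih]
  have hl : k + (((l - k).val : ℕ) : ZMod 5) = l := by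
    rw [ZMod.natCast_val, ZMod.cast_id]; ring
  have := step k (l - k).val
  rw [hl] at this
  exact this.symm
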